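/- Let m be a doubling measure on a metric space (X,d) and let U ⊊ X be a nonempty uniform domain. Then m(∂U) = 0. -/

import Mathlib

set_option linter.unusedSectionVars false
set_option maxHeartbeats 1000000

open scoped ENNReal
open Metric MeasureTheory Set Filter


section Aux
variable {X : Type*} [MetricSpace X] [MeasurableSpace X] [BorelSpace X]
  (m : MeasureTheory.Measure X) (D₀ : ℝ≥0∞)

lemma stmt8_aux_pow
    (hdoub : ∀ (x : X) (ρ : ℝ), 0 < ρ →
      m (Metric.ball x (2*ρ)) ≤ D₀ * m (Metric.ball x ρ)) :
    ∀ (n : ℕ) (x : X) (ρ : ℝ), 0 < ρ →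
      m (Metric.ball x (2^n * ρ)) ≤ D₀^n * m (Metric.ball x ρ) := by
  intro n
  induction n with
  | zero => intro x ρ hρ; simp
  | succ n ih =>
    intro x ρ hρ
    have h1 : (2:ℝ)^(n+1) * ρ = 2 * (2^n * ρ) := by ring
    rw [h1]
    calc m (Metric.ball x (2 * (2^n * ρ))) ≤ D₀ * m (Metric.ball x (2^n * ρ)) :=
          hdoub x _ (by positivity)
      _ ≤ D₀ * (D₀^n * m (Metric.ball x ρ)) := by gcongr; exact ih x ρ hρ
      _ = D₀^(n+1) * m (Metric.ball x ρ) := by rw [pow_succ, mul_comm (D₀^n) D₀, mul_assoc]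

lemma stmt8_aux_pos (hm0 : m ≠ 0)
    (hdoub : ∀ (x : X) (ρ : ℝ), 0 < ρ →
      m (Metric.ball x (2*ρ)) ≤ D₀ * m (Metric.ball x ρ))
    (x : X) (ρ : ℝ) (hρ : 0 < ρ) :
    0 < m (Metric.ball x ρ) := by
  by_contra h
  push_neg at h
  have h0 : m (Metric.ball x ρ) = 0 := le_antisymm h zero_le
  have hall : ∀ n : ℕ, m (Metric.ball x (2^n * ρ)) = 0 := fun n =>
    le_antisymm (le_trans (stmt8_aux_pow m D₀ hdoub n x ρ hρ) (by rw [h0, mul_zero])) zero_le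
  have huniv : (Set.univ : Set X) = ⋃ n : ℕ, Metric.ball x (2^n * ρ) := by
    ext y
    simp only [Set.mem_univ, Set.mem_iUnion, Metric.mem_ball, true_iff]
    obtain ⟨n, hn⟩ := pow_unbounded_of_one_lt (dist y x / ρ) (one_lt_two (α := ℝ))
    rw [div_lt_iff₀ hρ] at hn
    exact ⟨n, hn⟩
  have : m Set.univ = 0 := by rw [huniv]; exact measure_iUnion_null fun n => hall n
  exact hm0 (Measure.measure_univ_eq_zero.mp this)

lemma stmt8_aux_sc (hm0 : m ≠ 0)
    (hmball : ∀ (x : X) (ρ : ℝ), 0 < ρ → m (Metric.ball x ρ) < ⊤)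
    (hD₀ : 1 ≤ D₀) (hD₀top : D₀ ≠ ⊤)
    (hdoub : ∀ (x : X) (ρ : ℝ), 0 < ρ →
      m (Metric.ball x (2*ρ)) ≤ D₀ * m (Metric.ball x ρ)) :
    SecondCountableTopology X := by
  have hX : Nonempty X := by
    rcases isEmpty_or_nonempty X with h | h
    · exact absurd (Measure.measure_univ_eq_zero.mp (by simp [Set.univ_eq_empty_iff.mpr h])) hm0
    · exact h
  obtain ⟨x₀⟩ := hX
  refine Metric.secondCountable_of_almost_dense_set fun ε hε => ?_
  -- a maximal ε-separated set
  obtain ⟨M, hM⟩ := zorn_subset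
      {S : Set X | ∀ a ∈ S, ∀ b ∈ S, a ≠ b → ε ≤ dist a b} (by
    intro c hc hchain
    refine ⟨⋃₀ c, ?_, fun s hs => subset_sUnion_of_mem hs⟩
    rintro a ⟨s, hs, has⟩ b ⟨t, ht, hbt⟩ hab
    rcases hchain.total hs ht with hst | hts
    · exact hc ht a (hst has) b hbt hab
    · exact hc hs a has b (hts hbt) hab)
  have hMsep : ∀ a ∈ M, ∀ b ∈ M, a ≠ b → ε ≤ dist a b := hM.prop
  have hMnet : ∀ x : X, ∃ y ∈ M, dist x y ≤ ε := by
    intro x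
    by_contra hcon
    push_neg at hcon
    have hins : insert x M ∈ {S : Set X | ∀ a ∈ S, ∀ b ∈ S, a ≠ b → ε ≤ dist a b} := by
      rintro a (rfl | ha) b (rfl | hb) hab
      · exact absurd rfl hab
      · exact le_of_lt (hcon b hb)
      · rw [dist_comm]; exact le_of_lt (hcon a ha)
      · exact hMsep a ha b hb hab
    have : insert x M ⊆ M := hM.2 hins (subset_insert x M)
    exact absurd (le_of_lt (hcon x (this (mem_insert x M)))) (not_le.mpr (by simpa using hε))
  refine ⟨M, ?_, hMnet⟩
  -- countability
  have hfin : ∀ n : ℕ, (M ∩ Metric.ball x₀ (n+1)).Finite := by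
    intro n
    obtain ⟨k, hk⟩ := pow_unbounded_of_one_lt ((2*((n:ℝ)+1)+ε)/(ε/2)) (one_lt_two (α := ℝ))
    rw [div_lt_iff₀ (by positivity)] at hk
    set c := m (Metric.ball x₀ ((n:ℝ)+1+ε)) / D₀^k with hc
    have hDk1 : (1:ℝ≥0∞) ≤ D₀^k := one_le_pow_of_one_le' hD₀ k
    have hDk0 : D₀^k ≠ 0 := fun h => by simp [h] at hDk1
    have hDktop : D₀^k ≠ ⊤ := ENNReal.pow_ne_top hD₀top
    have hcpos : 0 < c :=
      ENNReal.div_pos (stmt8_aux_pos m D₀ hm0 hdoub x₀ _ (by positivity)).ne' hDktop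
    have hlow : ∀ y ∈ M ∩ Metric.ball x₀ (n+1), c ≤ m (Metric.ball y (ε/2)) := by
      rintro y ⟨-, hy⟩
      have hsub : Metric.ball x₀ ((n:ℝ)+1+ε) ⊆ Metric.ball y (2^k * (ε/2)) := by
        intro w hw
        rw [Metric.mem_ball] at hw ⊢
        have h1 : dist w y ≤ dist w x₀ + dist x₀ y := dist_triangle _ _ _
        rw [Metric.mem_ball, dist_comm] at hy
        calc dist w y ≤ dist w x₀ + dist x₀ y := h1
          _ < ((n:ℝ)+1+ε) + ((n:ℝ)+1) := by exact add_lt_add hw hy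
          _ = 2*((n:ℝ)+1)+ε := by ring
          _ < 2^k * (ε/2) := hk
      have : m (Metric.ball x₀ ((n:ℝ)+1+ε)) ≤ D₀^k * m (Metric.ball y (ε/2)) :=
        le_trans (measure_mono hsub) (stmt8_aux_pow m D₀ hdoub k y (ε/2) (by positivity))
      rw [hc, ENNReal.div_le_iff_le_mul (Or.inl hDk0) (Or.inl hDktop)]
      rw [mul_comm]
      exact this
    have hdisj : Pairwise (Function.onFun Disjoint
        (fun i : ↥(M ∩ Metric.ball x₀ (n+1)) => Metric.ball (i : X) (ε/2))) := by
      intro i j hij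
      have hne : (i : X) ≠ (j : X) := Subtype.coe_injective.ne hij
      exact Metric.ball_disjoint_ball (by
        have := hMsep i i.2.1 j j.2.1 hne
        linarith)
    have hub : (⋃ i : ↥(M ∩ Metric.ball x₀ (n+1)), Metric.ball (i : X) (ε/2)) ⊆
        Metric.ball x₀ ((n:ℝ)+1+ε) := by
      rintro w hw
      simp only [Set.mem_iUnion] at hw
      obtain ⟨i, hi⟩ := hw
      rw [Metric.mem_ball] at hi ⊢
      have h2 : dist (i:X) x₀ < (n:ℝ)+1 := i.2.2
      calc dist w x₀ ≤ dist w (i:X) + dist (i:X) x₀ := dist_triangle _ _ _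
        _ < ε/2 + ((n:ℝ)+1) := add_lt_add hi h2
        _ ≤ ((n:ℝ)+1+ε) := by linarith
    have hfin' := MeasureTheory.Measure.finite_const_le_meas_of_disjoint_iUnion m hcpos
      (fun i => measurableSet_ball) hdisj
      (ne_top_of_le_ne_top (hmball x₀ _ (by positivity)).ne (measure_mono hub))
    have : Finite ↥(M ∩ Metric.ball x₀ (n+1)) := by
      rw [← Set.finite_univ_iff]
      refine hfin'.subset fun i _ => hlow i i.2
    exact Set.finite_coe_iff.mp this
  have hcover : M ⊆ ⋃ n : ℕ, (M ∩ Metric.ball x₀ (n+1)) := by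
    intro y hy
    obtain ⟨n, hn⟩ := exists_nat_gt (dist y x₀)
    exact Set.mem_iUnion.mpr ⟨n, hy, by rw [Metric.mem_ball]; push_cast; linarith⟩
  exact (Set.countable_iUnion fun n => (hfin n).countable).mono hcover


end Aux

/-- `U` is an `A`-uniform domain in the metric space `X`. -/
def IsUniformDomain {X : Type*} [MetricSpace X] (A : ℝ) (U : Set X) : Prop :=
  U.Nonempty ∧ U ≠ Set.univ ∧ IsOpen U ∧ IsConnected U ∧
  ∀ x ∈ U, ∀ y ∈ U, ∃ γ : ℝ → X,
    ContinuousOn γ (Set.Icc 0 1) ∧ γ 0 = x ∧ γ 1 = y ∧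
    (∀ t ∈ Set.Icc (0:ℝ) 1, γ t ∈ U) ∧
    Metric.diam (γ '' Set.Icc 0 1) ≤ A * dist x y ∧
    ∀ t ∈ Set.Icc (0:ℝ) 1,
      A⁻¹ * min (dist x (γ t)) (dist y (γ t)) ≤ Metric.infDist (γ t) Uᶜ

/-- a doubling measure vanishes on the boundary of a uniform domain. -/
theorem stmt8 {X : Type*} [MetricSpace X] [MeasurableSpace X] [BorelSpace X]
    (m : MeasureTheory.Measure X) (hm0 : m ≠ 0)
    (hmball : ∀ (x : X) (ρ : ℝ), 0 < ρ → m (Metric.ball x ρ) < ⊤)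
    (D₀ : ℝ≥0∞) (hD₀ : 1 ≤ D₀) (hD₀top : D₀ ≠ ⊤)
    (hdoub : ∀ (x : X) (ρ : ℝ), 0 < ρ →
      m (Metric.ball x (2*ρ)) ≤ D₀ * m (Metric.ball x ρ))
    (A : ℝ) (hA : 1 ≤ A) (U : Set X) (hU : IsUniformDomain A U) :
    m (frontier U) = 0 := by
  obtain ⟨hne, hneuniv, hopen, hconn, hcurve⟩ := hU
  have hA0 : (0:ℝ) < A := lt_of_lt_of_le one_pos hA
  by_cases hsub : Set.Subsingleton U
  · obtain ⟨p, hp⟩ := hne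
    have hUp : U = {p} := hsub.eq_singleton_of_mem hp
    have : IsClopen U := ⟨hUp ▸ isClosed_singleton, hopen⟩
    rw [this.frontier_eq]
    exact measure_empty
  rw [Set.not_subsingleton_iff] at hsub
  obtain ⟨a, haU, b, hbU, hab⟩ := hsub
  set d := dist a b with hd'
  have hd : 0 < d := dist_pos.mpr hab
  -- instances
  have hloc : IsLocallyFiniteMeasure m :=
    ⟨fun x => ⟨Metric.ball x 1, Metric.ball_mem_nhds x one_pos, hmball x 1 one_pos⟩⟩
  have hsc : SecondCountableTopology X := stmt8_aux_sc m D₀ hm0 hmball hD₀ hD₀top hdoub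
  have hud : IsUnifLocDoublingMeasure m := by
    refine ⟨⟨(D₀^2).toNNReal, Filter.eventually_of_mem self_mem_nhdsWithin fun ε hε x => ?_⟩⟩
    have hε0 : (0:ℝ) < ε := hε
    have h1 : Metric.closedBall x (2*ε) ⊆ Metric.ball x (2*(2*ε)) :=
      Metric.closedBall_subset_ball (by linarith)
    calc m (Metric.closedBall x (2*ε)) ≤ m (Metric.ball x (2*(2*ε))) := measure_mono h1
      _ ≤ D₀ * m (Metric.ball x (2*ε)) := hdoub x (2*ε) (by linarith)
      _ ≤ D₀ * (D₀ * m (Metric.ball x ε)) := by gcongr; exact hdoub x ε hε0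
      _ ≤ D₀^2 * m (Metric.closedBall x ε) := by
          rw [← mul_assoc, ← sq]
          exact mul_le_mul_right (measure_mono Metric.ball_subset_closedBall) _
      _ = ↑(D₀^2).toNNReal * m (Metric.closedBall x ε) := by
          rw [ENNReal.coe_toNNReal (by exact ENNReal.pow_ne_top hD₀top)]
  -- corkscrew
  have key : ∀ ξ ∈ frontier U, ∀ r : ℝ, 0 < r → r ≤ 2*d/5 →
      ∃ z : X, dist ξ z ≤ r/2 ∧ Metric.ball z (r/(4*A)) ⊆ U ∧
        Metric.ball z (r/(4*A)) ⊆ Metric.ball ξ r := by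
    intro ξ hξ r hr hrd
    rw [hopen.frontier_eq] at hξ
    obtain ⟨hξc, hξU⟩ := hξ
    obtain ⟨x, hxU, hxd⟩ := Metric.mem_closure_iff.mp hξc (r/4) (by positivity)
    -- a point of U far from ξ
    obtain ⟨y, hyU, hyd⟩ : ∃ y ∈ U, d/2 ≤ dist ξ y := by
      rcases le_or_gt (d/2) (dist ξ a) with h | h
      · exact ⟨a, haU, h⟩
      · refine ⟨b, hbU, ?_⟩
        have := dist_triangle a ξ b
        rw [dist_comm a ξ] at this
        linarith [this, hd'.symm]
    obtain ⟨γ, hγc, hγ0, hγ1, hγU, hγdiam, hγcs⟩ := hcurve x hxU y hyU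
    have hxy : r ≤ dist x y := by
      have h1 := dist_triangle ξ x y
      have : dist ξ y ≤ dist ξ x + dist x y := h1
      linarith
    -- IVT
    have hf : ContinuousOn (fun t => dist x (γ t)) (Set.Icc 0 1) := by
      have hc : Continuous fun p : X => dist x p := continuous_const.dist continuous_id
      exact hc.comp_continuousOn hγc
    have hmem : r/4 ∈ Set.Icc (dist x (γ 0)) (dist x (γ 1)) := by
      rw [hγ0, hγ1, dist_self]
      exact ⟨by positivity, by linarith⟩
    obtain ⟨t, ht, hzt⟩ := intermediate_value_Icc zero_le_one hf hmem
    set z := γ t with hz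
    have hzU : z ∈ U := hγU t ht
    have hxz : dist x z = r/4 := hzt
    have hξz : dist ξ z ≤ r/2 := by
      have := dist_triangle ξ x z
      linarith
    have hyz : r/4 ≤ dist y z := by
      have h1 := dist_triangle x z y
      rw [dist_comm z y] at h1
      linarith
    have hinf : r/(4*A) ≤ Metric.infDist z Uᶜ := by
      have h1 := hγcs t ht
      have h2 : r/4 ≤ min (dist x (γ t)) (dist y (γ t)) := by
        rw [← hz] at *
        exact le_min (le_of_eq hxz.symm) hyz
      have h3 : A⁻¹ * (r/4) ≤ A⁻¹ * min (dist x (γ t)) (dist y (γ t)) := by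
        apply mul_le_mul_of_nonneg_left h2 (by positivity)
      have h4 : r/(4*A) = A⁻¹ * (r/4) := by
        field_simp
      rw [h4]
      exact le_trans h3 h1
    refine ⟨z, hξz, ?_, ?_⟩
    · intro w hw
      rw [Metric.mem_ball, dist_comm] at hw
      by_contra hwU
      have : Metric.infDist z Uᶜ ≤ dist z w := Metric.infDist_le_dist_of_mem hwU
      linarith
    · intro w hw
      rw [Metric.mem_ball] at hw ⊢
      have h1 := dist_triangle w z ξ
      rw [dist_comm z ξ] at h1
      have h2 : r/(4*A) ≤ r/4 := by
        rw [div_le_div_iff₀ (by positivity) (by norm_num)]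
        nlinarith
      linarith
  -- choose k with 8A ≤ 2^k
  obtain ⟨k, hk⟩ := pow_unbounded_of_one_lt (8*A) (one_lt_two (α := ℝ))
  have hDk1 : (1:ℝ≥0∞) ≤ D₀^k := one_le_pow_of_one_le' hD₀ k
  have hDk0 : D₀^k ≠ 0 := fun h => by simp [h] at hDk1
  have hDktop : D₀^k ≠ ⊤ := ENNReal.pow_ne_top hD₀top
  set q : ℝ≥0∞ := 1 - (D₀^k)⁻¹ with hq'
  have hq1 : q < 1 :=
    ENNReal.sub_lt_self ENNReal.one_ne_top one_ne_zero (ENNReal.inv_ne_zero.mpr hDktop)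
  have hden := IsUnifLocDoublingMeasure.ae_tendsto_measure_inter_div m (frontier U) 1
  have hae : ∀ᵐ ξ ∂m.restrict (frontier U), ξ ∉ frontier U := by
    refine hden.mono fun ξ hξ hmem => ?_
    have htend := hξ (fun _ : ℝ => ξ) (fun r => r) tendsto_id
      (Filter.eventually_of_mem self_mem_nhdsWithin fun r hr => by
        have : (0:ℝ) < r := hr
        simp only [Metric.mem_closedBall, dist_self, one_mul]
        linarith)
    have hev : ∀ᶠ r in nhdsWithin 0 (Set.Ioi (0:ℝ)),
        m (frontier U ∩ Metric.closedBall ξ r) / m (Metric.closedBall ξ r) ≤ q := by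
      have hIoc : Set.Ioc (0:ℝ) (2*d/5) ∈ nhdsWithin 0 (Set.Ioi (0:ℝ)) :=
        Ioc_mem_nhdsGT_of_mem ⟨le_refl 0, by linarith⟩
      filter_upwards [hIoc] with r hr
      obtain ⟨z, hz1, hz2, hz3⟩ := key ξ hmem r hr.1 hr.2
      set ρ := r/(4*A) with hρ'
      have hρ : 0 < ρ := div_pos hr.1 (by linarith)
      have hb : Metric.ball z ρ ⊆ Metric.closedBall ξ r :=
        hz3.trans Metric.ball_subset_closedBall
      have hcb : Metric.closedBall ξ r ⊆ Metric.ball z (2^k * ρ) := by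
        intro w hw
        rw [Metric.mem_closedBall] at hw
        rw [Metric.mem_ball]
        have h1 := dist_triangle w ξ z
        have hfr : (0:ℝ) < r/(4*A) := div_pos hr.1 (by linarith)
        have h2 : (2:ℝ)*r ≤ 2^k * ρ := by
          rw [hρ']
          have he : (8*A) * (r/(4*A)) = 2*r := by field_simp; ring
          calc (2:ℝ)*r = (8*A) * (r/(4*A)) := he.symm
            _ ≤ 2^k * (r/(4*A)) := mul_le_mul_of_nonneg_right hk.le hfr.le
        calc dist w z ≤ dist w ξ + dist ξ z := h1
          _ ≤ r + r/2 := by rw [dist_comm ξ z] at hz1 ⊢; exact add_le_add hw hz1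
          _ < 2*r := by linarith [hr.1]
          _ ≤ 2^k * ρ := h2
      set B := m (Metric.closedBall ξ r) with hB'
      set bb := m (Metric.ball z ρ) with hbb'
      have hbB : bb ≤ B := measure_mono hb
      have hBb : B ≤ D₀^k * bb :=
        (measure_mono hcb).trans (stmt8_aux_pow m D₀ hdoub k z ρ hρ)
      have hBtop : B ≠ ⊤ := by
        refine (lt_of_le_of_lt (measure_mono (Metric.closedBall_subset_ball
          (by linarith [hr.1] : r < 2*r))) (hmball ξ (2*r) (by linarith [hr.1]))).ne
      have hbpos : 0 < bb := stmt8_aux_pos m D₀ hm0 hdoub z ρ hρ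
      have hbtop : bb ≠ ⊤ := (lt_of_le_of_lt hbB hBtop.lt_top).ne
      have hB0 : B ≠ 0 := (lt_of_lt_of_le hbpos hbB).ne'
      have hfrU : ∀ w ∈ Metric.ball z ρ, w ∉ frontier U := by
        intro w hw hwf
        rw [hopen.frontier_eq] at hwf
        exact hwf.2 (hz2 hw)
      have hnum : m (frontier U ∩ Metric.closedBall ξ r) ≤ B - bb := by
        have hsub : frontier U ∩ Metric.closedBall ξ r ⊆
            Metric.closedBall ξ r \ Metric.ball z ρ := by
          rintro w ⟨hw1, hw2⟩
          exact ⟨hw2, fun hwb => hfrU w hwb hw1⟩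
        calc m (frontier U ∩ Metric.closedBall ξ r)
            ≤ m (Metric.closedBall ξ r \ Metric.ball z ρ) := measure_mono hsub
          _ = B - bb := measure_diff hb measurableSet_ball.nullMeasurableSet hbtop
      have h1 : (D₀^k)⁻¹ * B ≤ bb := by
        calc (D₀^k)⁻¹ * B ≤ (D₀^k)⁻¹ * (D₀^k * bb) := by gcongr
          _ = bb := by rw [← mul_assoc, ENNReal.inv_mul_cancel hDk0 hDktop, one_mul]
      have h2 : m (frontier U ∩ Metric.closedBall ξ r) ≤ q * B := by
        have hqB : q * B = B - (D₀^k)⁻¹ * B := by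
          rw [hq', ENNReal.sub_mul (fun _ _ => hBtop), one_mul]
        rw [hqB]
        exact le_trans hnum (tsub_le_tsub_left h1 B)
      rw [ENNReal.div_le_iff hB0 hBtop]
      exact h2
    have hle := le_of_tendsto htend hev
    exact absurd hle (not_le.mpr hq1)
  have h0 := ae_iff.mp hae
  simp only [not_not] at h0
  have h1 : (m.restrict (frontier U)) (frontier U) = 0 := by
    convert h0 using 2
    rfl
  rwa [Measure.restrict_apply_self] at h1
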